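/- Let C = (C² × {0}) + cl cone(C² × {1}) ⊆ ℝ³ with C² = {x ∈ ℝ² : x₂ ≥ x₁²}. Then the support function σ_C is not continuous relative to its domain dom σ_C = (rec C)°: for d = (0,0,−1)ᵀ and dₙ = (1/n, −1/(4n²), −1)ᵀ one has dₙ ∈ (rec C)° for all n ∈ ℕ, dₙ → d, σ_C(dₙ) ≥ 3/4 for all n, but σ_C(d) ≤ 0. -/

import Mathlib

open scoped InnerProductSpace Pointwise ENNReal
open Metric Filter

/-- The support function `σ_C(d) = sup_{x ∈ C} ⟪d, x⟫` of a set `C ⊆ ℝⁿ`,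
with values in the extended reals. -/
noncomputable def suppFun {n : ℕ} (C : Set (EuclideanSpace ℝ (Fin n)))
    (d : EuclideanSpace ℝ (Fin n)) : EReal :=
  ⨆ x ∈ C, ((⟪d, x⟫_ℝ : ℝ) : EReal)

/-- The effective domain `dom σ_C = {d : σ_C(d) < +∞}` of the support function. -/
def suppDom {n : ℕ} (C : Set (EuclideanSpace ℝ (Fin n))) :
    Set (EuclideanSpace ℝ (Fin n)) :=
  {d | suppFun C d < ⊤}

/-- The recession cone `rec C` of a set `C`. -/
def recCone {n : ℕ} (C : Set (EuclideanSpace ℝ (Fin n))) :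
    Set (EuclideanSpace ℝ (Fin n)) :=
  {y | ∀ x ∈ C, ∀ t : ℝ, 0 ≤ t → x + t • y ∈ C}

/-- The truncation `C_r = (C ∩ rB) + rec C` of `C` of radius `r`. -/
def trunc {n : ℕ} (C : Set (EuclideanSpace ℝ (Fin n))) (r : ℝ) :
    Set (EuclideanSpace ℝ (Fin n)) :=
  (C ∩ closedBall 0 r) + recCone C

/-- `C` is approximately M-decomposable: for every `ε > 0` there is `r > 0`
with `C ⊆ C_r + εB`. -/
def ApproxMDecomposable {n : ℕ} (C : Set (EuclideanSpace ℝ (Fin n))) : Prop :=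
  ∀ ε > (0 : ℝ), ∃ r > (0 : ℝ), C ⊆ trunc C r + closedBall 0 ε

/-- `C` is M-decomposable: `C = M + rec C` for some compact convex `M`. -/
def MDecomposable {n : ℕ} (C : Set (EuclideanSpace ℝ (Fin n))) : Prop :=
  ∃ M : Set (EuclideanSpace ℝ (Fin n)), IsCompact M ∧ Convex ℝ M ∧ C = M + recCone C

/-- `C` is hyperbolic: `C ⊆ M + rec C` for some compact convex `M`. -/
def Hyperbolic {n : ℕ} (C : Set (EuclideanSpace ℝ (Fin n))) : Prop :=
  ∃ M : Set (EuclideanSpace ℝ (Fin n)), IsCompact M ∧ Convex ℝ M ∧ C ⊆ M + recCone C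

/-- The polar cone `K° = {d : ⟪d, x⟫ ≤ 0 for all x ∈ K}` of a cone `K`. -/
def polarCone {n : ℕ} (K : Set (EuclideanSpace ℝ (Fin n))) :
    Set (EuclideanSpace ℝ (Fin n)) :=
  {d | ∀ x ∈ K, ⟪d, x⟫_ℝ ≤ 0}

/-- The cone generated by a set: `cone A = {λa : λ ≥ 0, a ∈ A}`. -/
def coneOf {n : ℕ} (A : Set (EuclideanSpace ℝ (Fin n))) :
    Set (EuclideanSpace ℝ (Fin n)) :=
  {y | ∃ t : ℝ, 0 ≤ t ∧ ∃ a ∈ A, y = t • a}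

/-- `C² × {0} ⊆ ℝ³`, where `C² = {x ∈ ℝ² : x₂ ≥ x₁²}`. -/
def parabolaBase : Set (EuclideanSpace ℝ (Fin 3)) :=
  {x | (x 0) ^ 2 ≤ x 1 ∧ x 2 = 0}

/-- `C² × {1} ⊆ ℝ³`, where `C² = {x ∈ ℝ² : x₂ ≥ x₁²}`. -/
def parabolaLift : Set (EuclideanSpace ℝ (Fin 3)) :=
  {x | (x 0) ^ 2 ≤ x 1 ∧ x 2 = 1}

/-- The set `C = (C² × {0}) + cl cone(C² × {1}) ⊆ ℝ³`. -/
def exampleSet : Set (EuclideanSpace ℝ (Fin 3)) :=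
  parabolaBase + closure (coneOf parabolaLift)

/-- The point `d = (0, 0, −1)ᵀ ∈ ℝ³`. -/
noncomputable def dpt : EuclideanSpace ℝ (Fin 3) :=
  (WithLp.equiv 2 (Fin 3 → ℝ)).symm ![0, 0, -1]

/-- The sequence `dₙ = (1/n, −1/(4n²), −1)ᵀ ∈ ℝ³`. -/
noncomputable def dseq (k : ℕ) : EuclideanSpace ℝ (Fin 3) :=
  (WithLp.equiv 2 (Fin 3 → ℝ)).symm ![1 / (k : ℝ), -1 / (4 * (k : ℝ) ^ 2), -1]

/-! ### Auxiliary development -/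


noncomputable def V (a b c : ℝ) : EuclideanSpace ℝ (Fin 3) :=
  (WithLp.equiv 2 (Fin 3 → ℝ)).symm ![a,b,c]

lemma V0 (a b c : ℝ) : V a b c 0 = a := rfl
lemma V1 (a b c : ℝ) : V a b c 1 = b := rfl
lemma V2 (a b c : ℝ) : V a b c 2 = c := rfl

lemma ext3 {x y : EuclideanSpace ℝ (Fin 3)} (h0 : x 0 = y 0) (h1 : x 1 = y 1)
    (h2 : x 2 = y 2) : x = y := by
  apply PiLp.ext; intro i; fin_cases i <;> assumption

lemma smul_coord (t : ℝ) (a : EuclideanSpace ℝ (Fin 3)) (i : Fin 3) : (t • a) i = t * a i := rfl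
lemma add_coord (a b : EuclideanSpace ℝ (Fin 3)) (i : Fin 3) : (a + b) i = a i + b i := rfl
lemma zero3 (i : Fin 3) : (0 : EuclideanSpace ℝ (Fin 3)) i = 0 := rfl

lemma inner3 (d x : EuclideanSpace ℝ (Fin 3)) :
    ⟪d, x⟫_ℝ = d 0 * x 0 + d 1 * x 1 + d 2 * x 2 := by
  simp [PiLp.inner_apply, RCLike.inner_apply, Fin.sum_univ_three]; ring

lemma dpt_eq : dpt = V 0 0 (-1) := rfl
lemma dseq_eq (k : ℕ) : dseq k = V (1/(k:ℝ)) (-1/(4*(k:ℝ)^2)) (-1) := rfl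

/-- The closed algebraic cone `{(x,y,z) : x² ≤ yz, y ≥ 0, z ≥ 0}`. -/
def Kalg : Set (EuclideanSpace ℝ (Fin 3)) :=
  {w | (w 0)^2 ≤ w 1 * w 2 ∧ 0 ≤ w 1 ∧ 0 ≤ w 2}

lemma Kalg_closed : IsClosed Kalg := by
  have h0 : Continuous fun w : EuclideanSpace ℝ (Fin 3) => w 0 := (continuous_apply _).comp (PiLp.continuous_ofLp _ _)
  have h1 : Continuous fun w : EuclideanSpace ℝ (Fin 3) => w 1 := (continuous_apply _).comp (PiLp.continuous_ofLp _ _)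
  have h2 : Continuous fun w : EuclideanSpace ℝ (Fin 3) => w 2 := (continuous_apply _).comp (PiLp.continuous_ofLp _ _)
  exact IsClosed.inter (isClosed_le (h0.pow 2) (h1.mul h2))
    (IsClosed.inter (isClosed_le continuous_const h1) (isClosed_le continuous_const h2))

lemma cone_sub_Kalg : coneOf parabolaLift ⊆ Kalg := by
  rintro y ⟨t, ht, a, ⟨ha1, ha2⟩, rfl⟩
  have h0 : a 0 ^ 2 ≤ a 1 := ha1
  refine ⟨?_, ?_, ?_⟩ <;> simp only [smul_coord, ha2]
  · nlinarith [sq_nonneg t]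
  · nlinarith [sq_nonneg (a 0)]
  · linarith

lemma closure_cone_sub_Kalg : closure (coneOf parabolaLift) ⊆ Kalg :=
  closure_minimal cone_sub_Kalg Kalg_closed

lemma Kalg_sub_closure : Kalg ⊆ closure (coneOf parabolaLift) := by
  rintro w ⟨hw0, hw1, hw2⟩
  rcases lt_or_eq_of_le hw2 with hz | hz
  · -- w 2 > 0 : w is itself in the cone
    apply subset_closure
    refine ⟨w 2, le_of_lt hz, V (w 0 / w 2) (w 1 / w 2) 1, ⟨?_, V2 _ _ _⟩, ?_⟩
    · rw [V0, V1]
      rw [div_pow, div_le_div_iff₀ (by positivity) hz]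
      nlinarith
    · refine ext3 ?_ ?_ ?_ <;> simp only [smul_coord, V0, V1, V2] <;> field_simp
  · -- w 2 = 0, so w 0 = 0; approximate
    have hw00 : w 0 = 0 := by nlinarith
    have hmem : ∀ k : ℕ, w + (1/((k:ℝ)+1)) • V 0 0 1 ∈ coneOf parabolaLift := by
      intro k
      have hk : (0:ℝ) < (k:ℝ)+1 := by positivity
      refine ⟨1/((k:ℝ)+1), by positivity, V 0 (((k:ℝ)+1) * w 1) 1, ⟨?_, V2 _ _ _⟩, ?_⟩
      · rw [V0, V1]; nlinarith [mul_nonneg hk.le hw1]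
      · refine ext3 ?_ ?_ ?_ <;> simp only [add_coord, smul_coord, V0, V1, V2]
        · rw [hw00]; ring
        · field_simp; ring
        · rw [← hz]; ring
    have hten : Tendsto (fun k : ℕ => w + (1/((k:ℝ)+1)) • V 0 0 1) atTop (nhds w) := by
      have h1 : Tendsto (fun k : ℕ => (1/((k:ℝ)+1)) • V 0 0 1) atTop
          (nhds ((0:ℝ) • V 0 0 1)) :=
        tendsto_one_div_add_atTop_nhds_zero_nat.smul_const _
      simpa using tendsto_const_nhds.add h1
    exact mem_closure_of_tendsto hten (Eventually.of_forall hmem)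

lemma closure_cone_eq : closure (coneOf parabolaLift) = Kalg :=
  le_antisymm closure_cone_sub_Kalg Kalg_sub_closure

lemma Kalg_add {w y : EuclideanSpace ℝ (Fin 3)} (hw : w ∈ Kalg) (hy : y ∈ Kalg) :
    w + y ∈ Kalg := by
  obtain ⟨h1, h2, h3⟩ := hw
  obtain ⟨g1, g2, g3⟩ := hy
  refine ⟨?_, ?_, ?_⟩ <;> simp only [add_coord]
  · nlinarith [sq_nonneg (w 1 * y 2 - w 2 * y 1), sq_nonneg (w 1 * y 2 + w 2 * y 1 - 2 * w 0 * y 0),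
      mul_nonneg h2 g3, mul_nonneg h3 g2, sq_nonneg (w 0 * y 0)]
  · linarith
  · linarith

lemma Kalg_smul {y : EuclideanSpace ℝ (Fin 3)} {t : ℝ} (ht : 0 ≤ t) (hy : y ∈ Kalg) :
    t • y ∈ Kalg := by
  obtain ⟨h1, h2, h3⟩ := hy
  refine ⟨?_, ?_, ?_⟩ <;> simp only [smul_coord]
  · nlinarith [sq_nonneg t]
  · positivity
  · positivity

lemma zero_mem_Kalg : (0 : EuclideanSpace ℝ (Fin 3)) ∈ Kalg := by
  refine ⟨?_, ?_, ?_⟩ <;> simp only [zero3] <;> norm_num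

lemma Kalg_sub_rec : Kalg ⊆ recCone exampleSet := by
  intro y hy x hx t ht
  obtain ⟨p, hp, q, hq, rfl⟩ := hx
  have hq' : q ∈ Kalg := closure_cone_sub_Kalg hq
  have hmem : q + t • y ∈ Kalg := Kalg_add hq' (Kalg_smul ht hy)
  exact ⟨p, hp, q + t • y, closure_cone_eq ▸ hmem, by exact (add_assoc p q (t • y)).symm⟩

lemma zero_mem_parabolaBase : (0 : EuclideanSpace ℝ (Fin 3)) ∈ parabolaBase := by
  constructor <;> simp only [zero3] <;> norm_num

lemma zero_mem_example : (0 : EuclideanSpace ℝ (Fin 3)) ∈ exampleSet :=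
  ⟨0, zero_mem_parabolaBase, 0, closure_cone_eq ▸ zero_mem_Kalg, by simp⟩

/-! ### Support function estimates -/

lemma mem_example_le_iSup {d x : EuclideanSpace ℝ (Fin 3)} (hx : x ∈ exampleSet) :
    ((⟪d, x⟫_ℝ : ℝ) : EReal) ≤ suppFun exampleSet d :=
  le_iSup₂ (f := fun x (_ : x ∈ exampleSet) => ((⟪d, x⟫_ℝ : ℝ) : EReal)) x hx

lemma suppFun_le_of_KalgPolar {d : EuclideanSpace ℝ (Fin 3)}
    (hd : ∀ w ∈ Kalg, ⟪d, w⟫_ℝ ≤ 0) :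
    suppFun exampleSet d ≤ ((-(d 2) : ℝ) : EReal) := by
  refine iSup₂_le fun x hx => ?_
  rw [EReal.coe_le_coe_iff]
  obtain ⟨p, ⟨hp1, hp2⟩, q, hq, rfl⟩ := hx
  have hdq : ⟪d, q⟫_ℝ ≤ 0 := hd q (closure_cone_sub_Kalg hq)
  have hd1 : d 1 ≤ 0 := by
    have h := hd (V 0 1 0) ⟨by rw [V0, V1, V2]; norm_num, by rw [V1]; norm_num,
      by rw [V2]⟩
    rw [inner3, V0, V1, V2] at h
    linarith
  have hdp : ⟪d, p⟫_ℝ ≤ -(d 2) := by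
    have h := hd (V (p 0) ((p 0)^2) 1) ⟨by rw [V0, V1, V2]; nlinarith [sq_nonneg (p 0)],
      by rw [V1]; positivity, by rw [V2]; norm_num⟩
    rw [inner3, V0, V1, V2] at h
    rw [inner3, hp2]
    nlinarith [mul_le_mul_of_nonpos_left hp1 hd1]
  calc ⟪d, p + q⟫_ℝ = ⟪d, p⟫_ℝ + ⟪d, q⟫_ℝ := inner_add_right d p q
    _ ≤ -(d 2) := by linarith

lemma zero_le_suppFun (d : EuclideanSpace ℝ (Fin 3)) :
    (0 : EReal) ≤ suppFun exampleSet d := by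
  have h := mem_example_le_iSup (d := d) zero_mem_example
  simpa using h

lemma suppDom_sub_polar : suppDom exampleSet ⊆ polarCone (recCone exampleSet) := by
  intro d hd y hy
  by_contra hpos
  push_neg at hpos
  set S := suppFun exampleSet d with hS
  have hStop : S ≠ ⊤ := ne_of_lt hd
  have hSbot : S ≠ ⊥ := ne_bot_of_le_ne_bot (by simp) (zero_le_suppFun d)
  have hMS : ((S.toReal : ℝ) : EReal) = S := EReal.coe_toReal hStop hSbot
  have hM0 : (0:ℝ) ≤ S.toReal := by
    have h0 := zero_le_suppFun d
    rw [← hS, ← hMS] at h0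
    exact_mod_cast h0
  have key : ∀ t : ℝ, 0 ≤ t → t * ⟪d, y⟫_ℝ ≤ S.toReal := by
    intro t ht
    have hmem : t • y ∈ exampleSet := by
      have h := hy 0 zero_mem_example t ht
      simpa using h
    have h2 : ((⟪d, t • y⟫_ℝ : ℝ) : EReal) ≤ S := mem_example_le_iSup hmem
    rw [← hMS, EReal.coe_le_coe_iff] at h2
    rwa [real_inner_smul_right] at h2
  have h3 := key ((S.toReal + 1) / ⟪d, y⟫_ℝ) (by positivity)
  rw [div_mul_cancel₀ _ (ne_of_gt hpos)] at h3
  linarith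

lemma polar_sub_dom : polarCone (recCone exampleSet) ⊆ suppDom exampleSet := by
  intro d hd
  have hK : ∀ w ∈ Kalg, ⟪d, w⟫_ℝ ≤ 0 := fun w hw => hd w (Kalg_sub_rec hw)
  exact lt_of_le_of_lt (suppFun_le_of_KalgPolar hK) (EReal.coe_lt_top _)

lemma dom_eq_polar : suppDom exampleSet = polarCone (recCone exampleSet) :=
  Set.Subset.antisymm suppDom_sub_polar polar_sub_dom

lemma dseq_KalgPolar {k : ℕ} (hk : 1 ≤ k) : ∀ w ∈ Kalg, ⟪dseq k, w⟫_ℝ ≤ 0 := by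
  rintro w ⟨hw0, hw1, hw2⟩
  rw [dseq_eq, inner3, V0, V1, V2]
  set K := (k : ℝ) with hKdef
  have hK : 1 ≤ K := by rw [hKdef]; exact_mod_cast hk
  have hK0 : 0 < K := by linarith
  have key : 4*K*(w 0) ≤ w 1 + 4*K^2*(w 2) := by
    set s := Real.sqrt (w 1) with hs
    set t := Real.sqrt (w 2) with htt
    have hs0 : 0 ≤ s := Real.sqrt_nonneg _
    have ht0 : 0 ≤ t := Real.sqrt_nonneg _
    have hs2 : s^2 = w 1 := Real.sq_sqrt hw1
    have ht2 : t^2 = w 2 := Real.sq_sqrt hw2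
    have habs : |w 0| ≤ s * t := by
      rw [← Real.sqrt_sq_eq_abs, ← Real.sqrt_mul hw1]
      exact Real.sqrt_le_sqrt hw0
    have h4 : 4*K*(w 0) ≤ 4*K*(s*t) :=
      mul_le_mul_of_nonneg_left ((le_abs_self _).trans habs) (by positivity)
    nlinarith [sq_nonneg (s - 2*K*t)]
  have heq : 1/K*(w 0) + (-1/(4*K^2))*(w 1) + (-1)*(w 2)
      = (4*K*(w 0) - (w 1 + 4*K^2*(w 2)))/(4*K^2) := by
    field_simp; ring
  rw [heq]
  exact div_nonpos_of_nonpos_of_nonneg (by linarith) (by positivity)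

lemma dpt_KalgPolar : ∀ w ∈ Kalg, ⟪dpt, w⟫_ℝ ≤ 0 := by
  rintro w ⟨hw0, hw1, hw2⟩
  rw [dpt_eq, inner3, V0, V1, V2]
  linarith

lemma dseq_mem_dom {k : ℕ} (hk : 1 ≤ k) : dseq k ∈ suppDom exampleSet := by
  have h := suppFun_le_of_KalgPolar (dseq_KalgPolar hk)
  exact lt_of_le_of_lt h (EReal.coe_lt_top _)

lemma dpt_mem_dom : dpt ∈ suppDom exampleSet :=
  lt_of_le_of_lt (suppFun_le_of_KalgPolar dpt_KalgPolar) (EReal.coe_lt_top _)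

lemma suppFun_dpt_nonpos : suppFun exampleSet dpt ≤ 0 := by
  refine iSup₂_le fun x hx => ?_
  obtain ⟨p, ⟨hp1, hp2⟩, q, hq, rfl⟩ := hx
  obtain ⟨-, -, hq2⟩ := closure_cone_sub_Kalg hq
  have hle : ⟪dpt, p + q⟫_ℝ ≤ 0 := by
    rw [dpt_eq, inner3]
    simp only [add_coord, V0, V1, V2]
    rw [hp2]
    linarith
  exact_mod_cast hle

lemma suppFun_dseq_ge {k : ℕ} (hk : 1 ≤ k) :
    ((3 : ℝ) / 4 : EReal) ≤ suppFun exampleSet (dseq k) := by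
  have hK0 : (0:ℝ) < (k:ℝ) := by exact_mod_cast hk
  have hxB : V (k:ℝ) ((k:ℝ)^2) 0 ∈ parabolaBase := ⟨by rw [V0, V1], by rw [V2]⟩
  have hxC : V (k:ℝ) ((k:ℝ)^2) 0 ∈ exampleSet :=
    ⟨_, hxB, 0, closure_cone_eq ▸ zero_mem_Kalg, by simp⟩
  have hval : ⟪dseq k, V (k:ℝ) ((k:ℝ)^2) 0⟫_ℝ = 3/4 := by
    rw [dseq_eq, inner3]
    show 1/(k:ℝ) * (k:ℝ) + (-1/(4*(k:ℝ)^2)) * ((k:ℝ)^2) + (-1) * 0 = 3/4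
    field_simp
    ring
  have h := mem_example_le_iSup (d := dseq k) hxC
  rw [hval] at h
  have hcast : ((3 : ℝ) / 4 : EReal) = (((3:ℝ)/4 : ℝ) : EReal) := by norm_cast
  rw [hcast]
  exact h

lemma tendsto_dseq : Tendsto dseq atTop (nhds dpt) := by
  have hrepr : ∀ k : ℕ, dseq k = dpt + (1/(k:ℝ)) • V 1 0 0 + (-1/(4*(k:ℝ)^2)) • V 0 1 0 := by
    intro k
    refine ext3 ?_ ?_ ?_ <;>
      simp only [dseq_eq, dpt_eq, add_coord, smul_coord, V0, V1, V2] <;> ring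
  have h0 : Tendsto (fun k : ℕ => 1/(k:ℝ)) atTop (nhds 0) :=
    tendsto_one_div_atTop_nhds_zero_nat
  have h1 : Tendsto (fun k : ℕ => -1/(4*(k:ℝ)^2)) atTop (nhds 0) := by
    have h2 : Tendsto (fun k : ℕ => (-1/4) * ((1/(k:ℝ)) * (1/(k:ℝ)))) atTop
        (nhds ((-1/4) * (0 * 0))) := (h0.mul h0).const_mul _
    refine Tendsto.congr (fun k => ?_) (by simpa using h2)
    rcases eq_or_ne (k:ℝ) 0 with h | h
    · simp [h]
    · field_simp
  have hsum : Tendsto (fun k : ℕ => dpt + (1/(k:ℝ)) • V 1 0 0 + (-1/(4*(k:ℝ)^2)) • V 0 1 0)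
      atTop (nhds (dpt + (0:ℝ) • V 1 0 0 + (0:ℝ) • V 0 1 0)) :=
    (tendsto_const_nhds.add (h0.smul_const (V 1 0 0))).add (h1.smul_const (V 0 1 0))
  simp only [zero_smul, add_zero] at hsum
  exact Tendsto.congr (fun k => (hrepr k).symm) hsum

lemma not_continuousOn : ¬ ContinuousOn (suppFun exampleSet) (suppDom exampleSet) := by
  intro hc
  have hcw : ContinuousWithinAt (suppFun exampleSet) (suppDom exampleSet) dpt :=
    hc dpt dpt_mem_dom
  have hseq : Tendsto dseq atTop (nhdsWithin dpt (suppDom exampleSet)) := by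
    rw [tendsto_nhdsWithin_iff]
    exact ⟨tendsto_dseq, eventually_atTop.mpr ⟨1, fun k hk => dseq_mem_dom hk⟩⟩
  have hten : Tendsto (fun k => suppFun exampleSet (dseq k)) atTop
      (nhds (suppFun exampleSet dpt)) := hcw.tendsto.comp hseq
  have hge : ((3 : ℝ) / 4 : EReal) ≤ suppFun exampleSet dpt :=
    ge_of_tendsto hten (eventually_atTop.mpr ⟨1, fun k hk => suppFun_dseq_ge hk⟩)
  have hc34 : ((3 : ℝ) / 4 : EReal) ≤ 0 := hge.trans suppFun_dpt_nonpos
  have hcast : ((3 : ℝ) / 4 : EReal) = (((3:ℝ)/4 : ℝ) : EReal) := by norm_cast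
  rw [hcast] at hc34
  have : ((3:ℝ)/4 : ℝ) ≤ 0 := by exact_mod_cast hc34
  norm_num at this

/-- for `C = (C² × {0}) + cl cone(C² × {1})`, the support
function `σ_C` is not continuous relative to its domain
`dom σ_C = (rec C)°`: one has `dₙ ∈ (rec C)°` for all `n ≥ 1`, `dₙ → d`,
`σ_C(dₙ) ≥ 3/4` for all `n ≥ 1`, but `σ_C(d) ≤ 0`, where `d = (0,0,−1)ᵀ`. -/
theorem exampleSet_suppFun_not_continuousOn :
    suppDom exampleSet = polarCone (recCone exampleSet) ∧
    ¬ ContinuousOn (suppFun exampleSet) (suppDom exampleSet) ∧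
    (∀ k : ℕ, 1 ≤ k → dseq k ∈ polarCone (recCone exampleSet)) ∧
    Tendsto dseq atTop (nhds dpt) ∧
    (∀ k : ℕ, 1 ≤ k → ((3 : ℝ) / 4 : EReal) ≤ suppFun exampleSet (dseq k)) ∧
    suppFun exampleSet dpt ≤ 0 :=
  ⟨dom_eq_polar, not_continuousOn,
    fun _ hk => dom_eq_polar ▸ dseq_mem_dom hk,
    tendsto_dseq, fun _ hk => suppFun_dseq_ge hk, suppFun_dpt_nonpos⟩
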